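/- arXiv:1408.5783 — 2 statements merged into one kernel-verified Lean document; each statement's English description precedes it below -/
import Mathlib

section
/- If all the level counts N_i of H are equal to the same number N for every cardinality i occurring in a P-free family A ⊆ 2^[n], then the Lubell function satisfies Σ_{A∈A} 1/C(n,|A|) ≤ α(H,P)/N. -/
set_option maxHeartbeats 1600000

open Finset

/-- A family `𝒜 ⊆ 2^[n]` contains the poset `P` as a weak subposet. -/
def containsWeak {n : ℕ} (𝒜 : Finset (Finset (Fin n))) (P : Type*) [PartialOrder P] : Prop :=
  ∃ φ : P → Finset (Fin n), Function.Injective φ ∧ (∀ x, φ x ∈ 𝒜) ∧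
    ∀ x y : P, x ≤ y → φ x ⊆ φ y

private lemma exists_perm_image {n : ℕ} (S S' : Finset (Fin n)) (h : S.card = S'.card) :
    ∃ τ : Equiv.Perm (Fin n), S.image τ = S' := by
  classical
  have h1 : Fintype.card {x // x ∈ S} = Fintype.card {x // x ∈ S'} := by
    simpa [Fintype.card_coe] using h
  have h2 : Fintype.card {x // ¬ x ∈ S} = Fintype.card {x // ¬ x ∈ S'} := by
    rw [Fintype.card_subtype_compl, Fintype.card_subtype_compl, h1]
  let e := Fintype.equivOfCardEq h1
  let f := Fintype.equivOfCardEq h2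
  refine ⟨Equiv.subtypeCongr e f, ?_⟩
  have hsub : S.image (Equiv.subtypeCongr e f) ⊆ S' := by
    intro y hy
    obtain ⟨x, hx, rfl⟩ := Finset.mem_image.mp hy
    simp only [Equiv.subtypeCongr, Equiv.trans_apply, Equiv.sumCompl_symm_apply_of_pos hx,
      Equiv.sumCongr_apply, Sum.map_inl, Equiv.sumCompl_apply_inl]
    exact (e ⟨x, hx⟩).2
  refine Finset.eq_of_subset_of_card_le hsub ?_
  rw [Finset.card_image_of_injective _ (Equiv.injective _)]
  omega

private lemma fib_const {n : ℕ} (A S S' : Finset (Fin n)) (h : S.card = S'.card) :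
    (univ.filter fun σ : Equiv.Perm (Fin n) => A.image σ = S).card
      = (univ.filter fun σ : Equiv.Perm (Fin n) => A.image σ = S').card := by
  classical
  obtain ⟨τ, hτ⟩ := exists_perm_image S S' h
  refine Finset.card_bij' (fun σ _ => τ * σ) (fun σ _ => τ⁻¹ * σ) ?_ ?_ ?_ ?_
  · intro σ hσ
    simp only [Finset.mem_filter, Finset.mem_univ, true_and] at hσ ⊢
    rw [show ⇑(τ * σ) = ⇑τ ∘ ⇑σ from rfl, ← Finset.image_image, hσ, hτ]
  · intro σ hσ
    simp only [Finset.mem_filter, Finset.mem_univ, true_and] at hσ ⊢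
    rw [show ⇑(τ⁻¹ * σ) = ⇑τ⁻¹ ∘ ⇑σ from rfl, ← Finset.image_image, hσ, ← hτ,
      Finset.image_image]
    have hid : ⇑τ⁻¹ ∘ ⇑τ = id := by ext x; simp
    rw [hid, Finset.image_id]
  · intro σ _; group
  · intro σ _; group

private lemma fib_mul {n : ℕ} (A : Finset (Fin n)) :
    n.choose A.card * (univ.filter fun σ : Equiv.Perm (Fin n) => A.image σ = A).card
      = n.factorial := by
  classical
  have key : (univ : Finset (Equiv.Perm (Fin n))).card
      = ∑ S ∈ univ.powersetCard A.card,
          (univ.filter fun σ : Equiv.Perm (Fin n) => A.image σ = S).card := by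
    refine Finset.card_eq_sum_card_fiberwise (fun σ _ => ?_)
    simp [Finset.mem_powersetCard_univ, Finset.card_image_of_injective _ σ.injective]
  have hconst : ∀ S ∈ univ.powersetCard A.card,
      (univ.filter fun σ : Equiv.Perm (Fin n) => A.image σ = S).card
        = (univ.filter fun σ : Equiv.Perm (Fin n) => A.image σ = A).card := by
    intro S hS
    exact fib_const A S A (by rw [Finset.mem_powersetCard_univ] at hS; omega)
  rw [Finset.sum_congr rfl hconst, Finset.sum_const, smul_eq_mul,
    Finset.card_powersetCard] at key
  simp only [Finset.card_univ, Fintype.card_perm, Fintype.card_fin] at key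
  omega

/-- If the family `H` has the same number `N` of sets of cardinality `i` for every
cardinality `i` occurring in the `P`-free family `𝒜`, and `α` bounds the size of every
`P`-free subfamily of `H` (in particular `α = α(H,P)`), then the Lubell function of `𝒜`
satisfies `Σ_{A∈𝒜} 1/C(n,|A|) ≤ α/N`. -/
theorem lubell_bound_uniform_levels (n : ℕ) (P : Type*) [PartialOrder P] [Fintype P]
    (H : Finset (Finset (Fin n))) (N α : ℕ) (hN : 0 < N)
    (hα : ∀ 𝒮 ⊆ H, ¬ containsWeak 𝒮 P → 𝒮.card ≤ α)
    (𝒜 : Finset (Finset (Fin n))) (h𝒜 : ¬ containsWeak 𝒜 P)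
    (hlevels : ∀ A ∈ 𝒜, (H.filter (fun S => S.card = A.card)).card = N) :
    ∑ A ∈ 𝒜, (1 : ℝ) / (n.choose A.card) ≤ (α : ℝ) / N := by
  classical
  set m : Finset (Fin n) → ℕ :=
    fun A => (univ.filter fun σ : Equiv.Perm (Fin n) => A.image σ = A).card with hm_def
  -- each permuted family intersected with H is a P-free subfamily of H
  have hfree : ∀ σ : Equiv.Perm (Fin n),
      (𝒜.filter fun A => A.image σ ∈ H).card ≤ α := by
    intro σ
    set 𝒮 := (𝒜.filter fun A => A.image σ ∈ H).image (fun A => A.image σ) with h𝒮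
    have hinj : Function.Injective (fun A : Finset (Fin n) => A.image σ) :=
      Finset.image_injective σ.injective
    have hcard : 𝒮.card = (𝒜.filter fun A => A.image σ ∈ H).card :=
      Finset.card_image_of_injective _ hinj
    have hsub : 𝒮 ⊆ H := by
      intro B hB
      obtain ⟨A, hA, rfl⟩ := Finset.mem_image.mp hB
      exact (Finset.mem_filter.mp hA).2
    have hSfree : ¬ containsWeak 𝒮 P := by
      rintro ⟨φ, hφinj, hφmem, hφmono⟩
      apply h𝒜
      refine ⟨fun x => (φ x).image ⇑σ.symm, ?_, ?_, ?_⟩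
      · exact (Finset.image_injective σ.symm.injective).comp hφinj
      · intro x
        obtain ⟨A, hA, hAx⟩ := Finset.mem_image.mp (hφmem x)
        have : (φ x).image ⇑σ.symm = A := by
          rw [← hAx, Finset.image_image]
          have hid : ⇑σ.symm ∘ ⇑σ = id := by ext x; simp
          rw [hid, Finset.image_id]
        show (φ x).image ⇑σ.symm ∈ 𝒜
        rw [this]
        exact Finset.mem_of_mem_filter A hA
      · intro x y hxy
        exact Finset.image_subset_image (hφmono x y hxy)
    rw [← hcard]
    exact hα 𝒮 hsub hSfree
  -- double counting
  have key : N * ∑ A ∈ 𝒜, m A ≤ n.factorial * α := by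
    have swap : ∑ σ : Equiv.Perm (Fin n), (𝒜.filter fun A => A.image σ ∈ H).card
        = ∑ A ∈ 𝒜, N * m A := by
      have h1 : ∀ σ : Equiv.Perm (Fin n), (𝒜.filter fun A => A.image σ ∈ H).card
          = ∑ A ∈ 𝒜, if A.image σ ∈ H then 1 else 0 := fun σ => Finset.card_filter _ _
      rw [Finset.sum_congr rfl fun σ _ => h1 σ, Finset.sum_comm]
      refine Finset.sum_congr rfl fun A hA => ?_
      have h2 : ∑ σ : Equiv.Perm (Fin n), (if A.image σ ∈ H then 1 else 0)
          = (univ.filter fun σ : Equiv.Perm (Fin n) => A.image σ ∈ H).card := by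
        rw [Finset.card_filter]
      rw [h2]
      have h3 : (univ.filter fun σ : Equiv.Perm (Fin n) => A.image σ ∈ H).card
          = ∑ S ∈ H.filter (fun S => S.card = A.card),
              ((univ.filter fun σ : Equiv.Perm (Fin n) => A.image σ ∈ H).filter
                (fun σ : Equiv.Perm (Fin n) => A.image σ = S)).card := by
        refine Finset.card_eq_sum_card_fiberwise (fun σ hσ => ?_)
        rw [Finset.mem_coe, Finset.mem_filter] at hσ
        rw [Finset.mem_coe, Finset.mem_filter]
        exact ⟨hσ.2, Finset.card_image_of_injective _ σ.injective⟩
      rw [h3]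
      have h4 : ∀ S ∈ H.filter (fun S => S.card = A.card),
          ((univ.filter fun σ : Equiv.Perm (Fin n) => A.image σ ∈ H).filter
            (fun σ : Equiv.Perm (Fin n) => A.image σ = S)).card = m A := by
        intro S hS
        rw [Finset.mem_filter] at hS
        have heq : (univ.filter fun σ : Equiv.Perm (Fin n) => A.image σ ∈ H).filter
            (fun σ : Equiv.Perm (Fin n) => A.image σ = S) = univ.filter fun σ : Equiv.Perm (Fin n) =>
            A.image σ = S := by
          rw [Finset.filter_filter]
          refine Finset.filter_congr fun σ _ => ?_
          constructor
          · exact fun h => h.2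
          · exact fun h => ⟨h ▸ hS.1, h⟩
        rw [heq, hm_def]
        exact fib_const A S A hS.2
      rw [Finset.sum_congr rfl h4, Finset.sum_const, hlevels A hA, smul_eq_mul]
    have bound : ∑ σ : Equiv.Perm (Fin n), (𝒜.filter fun A => A.image σ ∈ H).card
        ≤ n.factorial * α := by
      calc ∑ σ : Equiv.Perm (Fin n), (𝒜.filter fun A => A.image σ ∈ H).card
          ≤ ∑ _σ : Equiv.Perm (Fin n), α := Finset.sum_le_sum fun σ _ => hfree σ
        _ = n.factorial * α := by
            rw [Finset.sum_const, Finset.card_univ, Fintype.card_perm, Fintype.card_fin,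
              smul_eq_mul]
    rw [← Finset.mul_sum, ← swap] at *
    exact bound
  -- transfer to the reals
  have hfac : (0:ℝ) < n.factorial := by exact_mod_cast n.factorial_pos
  have hNR : (0:ℝ) < N := by exact_mod_cast hN
  have hterm : ∀ A ∈ 𝒜, (1 : ℝ) / (n.choose A.card) = (m A : ℝ) / n.factorial := by
    intro A hA
    have hc : 0 < n.choose A.card := by
      apply Nat.choose_pos
      have := Finset.card_le_univ A
      simpa using this
    have h := fib_mul A
    rw [div_eq_div_iff (by exact_mod_cast hc.ne' : (n.choose A.card : ℝ) ≠ 0) hfac.ne',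
      one_mul]
    have h' : n.factorial = m A * n.choose A.card := by rw [← h]; ring
    exact_mod_cast h'
  rw [Finset.sum_congr rfl hterm, ← Finset.sum_div,
    div_le_div_iff₀ hfac hNR]
  have : ((∑ A ∈ 𝒜, m A : ℕ) : ℝ) * N ≤ (n.factorial : ℝ) * α := by
    rw [mul_comm]
    exact_mod_cast key
  calc (∑ A ∈ 𝒜, (m A : ℝ)) * N = ((∑ A ∈ 𝒜, m A : ℕ) : ℝ) * N := by push_cast; ring
    _ ≤ (n.factorial : ℝ) * α := this
    _ = (α : ℝ) * n.factorial := by ring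
end

section
/- Fix k ≥ 2 and suppose 3k−3 ≤ m ≤ n−k+1. The number of sets in the k-interval chain C_k^0 of cardinality at most m−1 that are incomparable (under inclusion) to at least one set in C_k^0 of cardinality at least m equals (3k−5)·2^{k−2}. -/
/-- The initial segment `{1,…,i}` of `[n]`, as a subset of `Fin n`. -/
def initSeg (n i : ℕ) : Finset (Fin n) := Finset.univ.filter (fun x => (x : ℕ) < i)

/-- The `k`-interval chain `C_k^0 = ⋃_{i=0}^{n-k} [[i],[i+k]]`. -/
def intervalChain (n k : ℕ) : Finset (Finset (Fin n)) :=
  (Finset.range (n - k + 1)).biUnion (fun i => Finset.Icc (initSeg n i) (initSeg n (i + k)))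

open Finset

lemma mem_initSeg {n i : ℕ} {x : Fin n} : x ∈ initSeg n i ↔ (x:ℕ) < i := by
  simp [initSeg]

lemma initSeg_card {n i : ℕ} (h : i ≤ n) : (initSeg n i).card = i := by
  rw [← Finset.card_image_of_injective (initSeg n i) Fin.val_injective]
  have : (initSeg n i).image Fin.val = Finset.range i := by
    ext j
    simp only [Finset.mem_image, Finset.mem_range]
    constructor
    · rintro ⟨x, hx, rfl⟩; exact mem_initSeg.1 hx
    · intro hj; exact ⟨⟨j, lt_of_lt_of_le hj h⟩, mem_initSeg.2 hj, rfl⟩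
  rw [this, Finset.card_range]

lemma initSeg_mono {n i j : ℕ} (h : i ≤ j) : initSeg n i ⊆ initSeg n j := by
  intro x hx; exact mem_initSeg.2 (lt_of_lt_of_le (mem_initSeg.1 hx) h)

lemma mem_chain {n k : ℕ} {A : Finset (Fin n)} :
    A ∈ intervalChain n k ↔ ∃ i, i ≤ n - k ∧ initSeg n i ⊆ A ∧ A ⊆ initSeg n (i + k) := by
  simp only [intervalChain, Finset.mem_biUnion, Finset.mem_range, Finset.mem_Icc]
  constructor
  · rintro ⟨i, hi, h1, h2⟩; exact ⟨i, by omega, h1, h2⟩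
  · rintro ⟨i, hi, h1, h2⟩; exact ⟨i, by omega, h1, h2⟩

lemma char_lemma {n k m : ℕ} (hk : 2 ≤ k) (hm₁ : 3 * k - 3 ≤ m) (hn : m + k ≤ n + 1)
    {A : Finset (Fin n)} (hcard : A.card ≤ m - 1) :
    (∃ B ∈ intervalChain n k, m ≤ B.card ∧ ¬ A ⊆ B ∧ ¬ B ⊆ A) ↔
      ∃ a ∈ A, m < k + (a:ℕ) := by
  constructor
  · rintro ⟨B, hB, hBm, hAB, -⟩
    obtain ⟨i, hi, hiB, hBi⟩ := mem_chain.1 hB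
    have hikn : i + k ≤ n := by omega
    have hBcard : B.card ≤ i + k := by
      calc B.card ≤ (initSeg n (i+k)).card := Finset.card_le_card hBi
        _ = i + k := initSeg_card hikn
    obtain ⟨a, haA, haB⟩ := Finset.not_subset.1 hAB
    refine ⟨a, haA, ?_⟩
    have hai : i ≤ (a:ℕ) := by
      by_contra hc
      exact haB (hiB (mem_initSeg.2 (by omega)))
    by_contra hc
    push_neg at hc
    have haik : (a:ℕ) < i + k := by omega
    have hBe : B ⊆ (initSeg n (i+k)).erase a := by
      intro x hx
      refine Finset.mem_erase.2 ⟨fun h => haB (h ▸ hx), hBi hx⟩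
    have := Finset.card_le_card hBe
    rw [Finset.card_erase_of_mem (mem_initSeg.2 haik), initSeg_card hikn] at this
    omega
  · rintro ⟨a, haA, ham⟩
    have han : (a:ℕ) < n := a.isLt
    set i : ℕ := min (a:ℕ) (n - k) with hidef
    have hik : (a:ℕ) < i + k := by omega
    have hikn : i + k ≤ n := by omega
    refine ⟨(initSeg n (i+k)).erase a, ?_, ?_, ?_, ?_⟩
    · refine mem_chain.2 ⟨i, by omega, ?_, Finset.erase_subset _ _⟩
      intro x hx
      have hxi := mem_initSeg.1 hx
      refine Finset.mem_erase.2 ⟨fun h => ?_, mem_initSeg.2 (by omega)⟩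
      have : (x:ℕ) = (a:ℕ) := by rw [h]
      omega
    · rw [Finset.card_erase_of_mem (mem_initSeg.2 hik), initSeg_card hikn]
      omega
    · intro h
      exact (Finset.notMem_erase a _) (h haA)
    · intro h
      have := Finset.card_le_card h
      rw [Finset.card_erase_of_mem (mem_initSeg.2 hik), initSeg_card hikn] at this
      omega


lemma sum_two_pow (n : ℕ) : (∑ i ∈ Finset.range n, 2^i) + 1 = 2^n := by
  induction n with
  | zero => simp
  | succ n ih => rw [Finset.sum_range_succ]; rw [pow_succ]; omega

lemma tri_sum (f : ℕ → ℕ) (K : ℕ) :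
    ∑ i ∈ range K, ∑ c ∈ range (K - i), f c = ∑ c ∈ range K, (K - c) * f c := by
  induction K with
  | zero => simp
  | succ K ih =>
    rw [Finset.sum_range_succ]
    have h1 : ∀ i ∈ range K, ∑ c ∈ range (K + 1 - i), f c
        = (∑ c ∈ range (K - i), f c) + f (K - i) := by
      intro i hi
      have hi' := mem_range.1 hi
      have : K + 1 - i = (K - i) + 1 := by omega
      rw [this, Finset.sum_range_succ]
    rw [Finset.sum_congr rfl h1, Finset.sum_add_distrib, ih]
    have h2 : ∑ i ∈ range K, f (K - i) = ∑ i ∈ range K, f (i + 1) := by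
      have := Finset.sum_range_reflect (fun r => f (r + 1)) K
      rw [← this]
      apply Finset.sum_congr rfl
      intro i hi
      have := mem_range.1 hi
      congr 1
      omega
    have h3 : ∀ c ∈ range (K + 1), (K + 1 - c) * f c = (K - c) * f c + f c := by
      intro c hc
      have := mem_range.1 hc
      have : K + 1 - c = (K - c) + 1 := by omega
      rw [this, add_mul, one_mul]
    rw [Finset.sum_congr rfl h3, Finset.sum_add_distrib, Finset.sum_range_succ (fun c => (K - c) * f c),
      Nat.sub_self, zero_mul, add_zero]
    have h5 : K + 1 - K = 1 := by omega
    rw [h5, Finset.sum_range_one, h2]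
    have h4 : (∑ i ∈ range K, f (i + 1)) + f 0 = (∑ i ∈ range K, f i) + f K := by
      rw [← Finset.sum_range_succ' f K, Finset.sum_range_succ f K]
    have h6 : ∑ x ∈ range (K + 1), f x = (∑ i ∈ range K, f i) + f K :=
      Finset.sum_range_succ f K
    omega

lemma choose_sum_A (K : ℕ) : (∑ c ∈ range (K + 1), (K + 1).choose c) + 1 = 2 ^ (K + 1) := by
  have := Nat.sum_range_choose (K + 1)
  rw [Finset.sum_range_succ] at this
  rw [← this, Nat.choose_self]

lemma choose_sum_B (K : ℕ) :
    (∑ c ∈ range (K + 1), c * (K + 1).choose c) + (K + 1) = (K + 1) * 2 ^ K := by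
  have hfull : ∑ c ∈ range (K + 2), c * (K + 1).choose c = (K + 1) * 2 ^ K := by
    rw [Finset.sum_range_succ' (fun c => c * (K + 1).choose c) (K + 1)]
    simp only [zero_mul, add_zero]
    have hterm : ∀ i ∈ range (K + 1), (i + 1) * (K + 1).choose (i + 1) = (K + 1) * K.choose i := by
      intro i hi
      rw [mul_comm]
      exact (Nat.add_one_mul_choose_eq K i).symm
    rw [Finset.sum_congr rfl hterm, ← Finset.mul_sum, Nat.sum_range_choose]
  rw [Finset.sum_range_succ, Nat.choose_self, mul_one] at hfull
  omega

lemma phi_identity (K : ℕ) :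
    (∑ i ∈ range K, ∑ c ∈ range (K - i), (K + 1).choose c) + 2 ^ K = K * 2 ^ K + 1 := by
  rw [tri_sum]
  have hext : ∑ c ∈ range K, (K - c) * (K + 1).choose c
      = ∑ c ∈ range (K + 1), (K - c) * (K + 1).choose c := by
    rw [Finset.sum_range_succ, Nat.sub_self, zero_mul, add_zero]
  rw [hext]
  have hsplit : (∑ c ∈ range (K + 1), (K - c) * (K + 1).choose c)
      + (∑ c ∈ range (K + 1), c * (K + 1).choose c)
      = K * (∑ c ∈ range (K + 1), (K + 1).choose c) := by
    rw [← Finset.sum_add_distrib, Finset.mul_sum]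
    apply Finset.sum_congr rfl
    intro c hc
    have := mem_range.1 hc
    have h : (K - c) + c = K := by omega
    rw [← add_mul, h]
  have hA := choose_sum_A K
  have hB := choose_sum_B K
  set Phi := ∑ c ∈ range (K + 1), (K - c) * (K + 1).choose c with hPhi
  set A' := ∑ c ∈ range (K + 1), (K + 1).choose c with hA'
  set B' := ∑ c ∈ range (K + 1), c * (K + 1).choose c with hB'
  have h1 : K * A' + K = 2 * (K * 2 ^ K) := by
    calc K * A' + K = K * (A' + 1) := by ring
      _ = K * (2 ^ (K + 1)) := by rw [hA]
      _ = 2 * (K * 2 ^ K) := by ring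
  have h2 : B' + (K + 1) = K * 2 ^ K + 2 ^ K := by
    rw [hB]; ring
  have h3 : Phi + B' = K * A' := hsplit
  have hKP : 1 ≤ 2 ^ K := Nat.one_le_two_pow
  generalize K * A' = x at h1 h3
  generalize K * 2 ^ K = y at h1 h2 ⊢
  omega

lemma sum_S1 (K : ℕ) :
    (∑ j ∈ range (K + 1), (2 ^ (K + 1) - 2 ^ (K - j))) + 2 ^ (K + 1)
      = (K + 1) * 2 ^ (K + 1) + 1 := by
  have hgeo : ∑ j ∈ range (K + 1), 2 ^ (K - j) = ∑ j ∈ range (K + 1), 2 ^ j := by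
    have := Finset.sum_range_reflect (fun r => 2 ^ r) (K + 1)
    rw [← this]
    apply Finset.sum_congr rfl
    intro j hj
    congr 1
  have hadd : (∑ j ∈ range (K + 1), (2 ^ (K + 1) - 2 ^ (K - j)))
      + (∑ j ∈ range (K + 1), 2 ^ (K - j)) = (K + 1) * 2 ^ (K + 1) := by
    rw [← Finset.sum_add_distrib]
    have : ∀ j ∈ range (K + 1), (2 ^ (K + 1) - 2 ^ (K - j)) + 2 ^ (K - j) = 2 ^ (K + 1) := by
      intro j hj
      have hle : 2 ^ (K - j) ≤ 2 ^ (K + 1) := Nat.pow_le_pow_right (by norm_num) (by omega)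
      omega
    rw [Finset.sum_congr rfl this, Finset.sum_const, card_range, smul_eq_mul]
  have := sum_two_pow (K + 1)
  omega

lemma fiber_small (N r : ℕ) :
    ((Finset.univ.powerset : Finset (Finset (Fin N))).filter (fun T => T.card ≤ r)).card
      = ∑ c ∈ range (r + 1), N.choose c := by
  have hset : (Finset.univ.powerset : Finset (Finset (Fin N))).filter (fun T => T.card ≤ r)
      = (range (r + 1)).biUnion (fun c => Finset.powersetCard c Finset.univ) := by
    ext T
    simp only [Finset.mem_filter, Finset.mem_powerset, Finset.mem_biUnion, Finset.mem_range,
      Finset.mem_powersetCard, Finset.subset_univ, true_and]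
    constructor
    · intro h; exact ⟨T.card, by omega, rfl⟩
    · rintro ⟨c, hc, rfl⟩; omega
  rw [hset, Finset.card_biUnion]
  · apply Finset.sum_congr rfl
    intro c _
    rw [Finset.card_powersetCard, Finset.card_univ, Fintype.card_fin]
  · intro c _ c' _ hne
    rw [Function.onFun, Finset.disjoint_left]
    intro T hT hT'
    rw [Finset.mem_powersetCard] at hT hT'
    exact hne (hT.2 ▸ hT'.2)

lemma fiber_exists (N v : ℕ) (hv : v ≤ N) :
    ((Finset.univ.powerset : Finset (Finset (Fin N))).filter
        (fun T => ∃ q : Fin N, q ∈ T ∧ v ≤ (q : ℕ))).card + 2 ^ v = 2 ^ N := by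
  have hsplit := Finset.card_filter_add_card_filter_not
    (s := (Finset.univ.powerset : Finset (Finset (Fin N)))) (p := fun T => ∃ q : Fin N, q ∈ T ∧ v ≤ (q : ℕ))
  have hneg : (Finset.univ.powerset : Finset (Finset (Fin N))).filter
      (fun T => ¬ ∃ q : Fin N, q ∈ T ∧ v ≤ (q : ℕ)) = (initSeg N v).powerset := by
    ext T
    rw [Finset.mem_filter, Finset.mem_powerset]
    constructor
    · rintro ⟨-, h⟩
      rw [Finset.mem_powerset]
      intro x hx
      refine mem_initSeg.2 ?_
      by_contra hc
      exact h ⟨x, hx, by omega⟩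
    · intro h
      refine ⟨Finset.subset_univ T, ?_⟩
      rintro ⟨q, hq, hvq⟩
      have := mem_initSeg.1 (Finset.mem_powerset.1 h hq)
      omega
  rw [hneg, Finset.card_powerset, initSeg_card hv, Finset.card_powerset, Finset.card_univ,
    Fintype.card_fin] at hsplit
  exact hsplit

lemma fiber_mid (K : ℕ) :
    ((Finset.univ.powerset : Finset (Finset (Fin (K + 1)))).filter
        (fun T => T.card ≤ K ∧ T.Nonempty)).card + 2 = 2 ^ (K + 1) := by
  have hset : (Finset.univ.powerset : Finset (Finset (Fin (K + 1)))).filter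
      (fun T => T.card ≤ K ∧ T.Nonempty)
      = Finset.univ.powerset \ {Finset.univ, ∅} := by
    ext T
    simp only [Finset.mem_filter, Finset.mem_powerset, Finset.subset_univ, true_and,
      Finset.mem_sdiff, Finset.mem_insert, Finset.mem_singleton, not_or]
    constructor
    · rintro ⟨hc, hne⟩
      refine ⟨fun h => ?_, Finset.nonempty_iff_ne_empty.1 hne⟩
      rw [h, Finset.card_univ, Fintype.card_fin] at hc
      omega
    · rintro ⟨hu, he⟩
      refine ⟨?_, Finset.nonempty_iff_ne_empty.2 he⟩
      by_contra hc
      push_neg at hc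
      have : T = Finset.univ := Finset.eq_univ_of_card T (by
        have hle := Finset.card_le_card (Finset.subset_univ T)
        rw [Finset.card_univ, Fintype.card_fin] at hle
        rw [Fintype.card_fin]
        omega)
      exact hu this
  rw [hset, Finset.card_sdiff_of_subset (by
    intro x hx
    simp only [Finset.mem_insert, Finset.mem_singleton] at hx
    rcases hx with rfl | rfl <;> simp)]
  have hcardpair : ({Finset.univ, ∅} : Finset (Finset (Fin (K + 1)))).card = 2 := by
    rw [Finset.card_insert_of_notMem (by
      simp only [Finset.mem_singleton]
      intro h
      have : (0 : Fin (K+1)) ∈ (Finset.univ : Finset (Fin (K+1))) := Finset.mem_univ _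
      rw [h] at this
      exact absurd this (Finset.notMem_empty _)), Finset.card_singleton]
  rw [hcardpair, Finset.card_powerset, Finset.card_univ, Fintype.card_fin]
  have : 2 ≤ 2 ^ (K + 1) := by
    calc 2 = 2^1 := by norm_num
      _ ≤ 2 ^ (K+1) := Nat.pow_le_pow_right (by norm_num) (by omega)
  omega

def Qpred (K j : ℕ) (T : Finset (Fin (K + 1))) : Prop :=
  T.card + j ≤ 2 * K + 1 ∧ (K + 2 ≤ j ∨ ∃ q : Fin (K + 1), q ∈ T ∧ K ≤ j + (q : ℕ))

instance (K j : ℕ) : DecidablePred (Qpred K j) := fun _ => by unfold Qpred; infer_instance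

def embSet (n b K j : ℕ) (T : Finset (Fin (K + 1))) : Finset (Fin n) :=
  initSeg n (b + j) ∪
    Finset.univ.filter (fun x => ∃ q : Fin (K + 1), q ∈ T ∧ (x : ℕ) = b + j + 1 + (q : ℕ))

lemma mem_embSet {n b K j : ℕ} {T : Finset (Fin (K + 1))} {x : Fin n} :
    x ∈ embSet n b K j T ↔
      (x : ℕ) < b + j ∨ ∃ q : Fin (K + 1), q ∈ T ∧ (x : ℕ) = b + j + 1 + (q : ℕ) := by
  simp [embSet, mem_initSeg]

lemma card_embSet {n b K j : ℕ} (hn : b + 3 * K + 3 ≤ n) (hj : j ≤ 2 * K + 1)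
    (T : Finset (Fin (K + 1))) : (embSet n b K j T).card = b + j + T.card := by
  rw [embSet, Finset.card_union_of_disjoint]
  · rw [initSeg_card (by omega)]
    congr 1
    set W := Finset.univ.filter
      (fun x : Fin n => ∃ q : Fin (K + 1), q ∈ T ∧ (x : ℕ) = b + j + 1 + (q : ℕ)) with hW
    have himg : W.image Fin.val = T.image (fun q : Fin (K + 1) => b + j + 1 + (q : ℕ)) := by
      ext r
      simp only [hW, Finset.mem_image, Finset.mem_filter, Finset.mem_univ, true_and]
      constructor
      · rintro ⟨x, ⟨q, hq, hx⟩, rfl⟩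
        exact ⟨q, hq, hx.symm⟩
      · rintro ⟨q, hq, rfl⟩
        have hqK := q.isLt
        exact ⟨⟨b + j + 1 + (q : ℕ), by omega⟩, ⟨q, hq, rfl⟩, rfl⟩
    have h1 : W.card = (W.image Fin.val).card :=
      (Finset.card_image_of_injective W Fin.val_injective).symm
    have h2 : (T.image (fun q : Fin (K + 1) => b + j + 1 + (q : ℕ))).card = T.card := by
      apply Finset.card_image_of_injective
      intro q q' h
      have h' : b + j + 1 + (q : ℕ) = b + j + 1 + (q' : ℕ) := h
      exact Fin.ext (by omega)
    rw [h1, himg, h2]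
  · rw [Finset.disjoint_left]
    intro x hx hx'
    have h1 := mem_initSeg.1 hx
    obtain ⟨q, -, h2⟩ := (Finset.mem_filter.1 hx').2
    omega

lemma embSet_mem_aux {n b K j : ℕ} (hn : b + 3 * K + 3 ≤ n) (hj : j ≤ 2 * K + 1)
    (T : Finset (Fin (K + 1))) (q : Fin (K + 1)) :
    q ∈ T ↔ (⟨b + j + 1 + (q : ℕ), by have := q.isLt; omega⟩ : Fin n) ∈ embSet n b K j T := by
  constructor
  · intro hq
    exact mem_embSet.2 (Or.inr ⟨q, hq, rfl⟩)
  · intro hq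
    rcases mem_embSet.1 hq with h | ⟨q', hq', h⟩
    · simp only at h; omega
    · simp only at h
      have : q = q' := Fin.ext (by omega)
      rw [this]; exact hq'

lemma embSet_injOn {n b K j : ℕ} (hn : b + 3 * K + 3 ≤ n) (hj : j ≤ 2 * K + 1)
    {T T' : Finset (Fin (K + 1))} (heq : embSet n b K j T = embSet n b K j T') : T = T' := by
  ext q
  rw [embSet_mem_aux hn hj T q, embSet_mem_aux hn hj T' q, heq]

lemma embSet_ne {n b K j j' : ℕ} (hn : b + 3 * K + 3 ≤ n) (hjj : j < j') (hj' : j' ≤ 2 * K + 1)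
    (T T' : Finset (Fin (K + 1))) : embSet n b K j T ≠ embSet n b K j' T' := by
  intro heq
  have hx : (⟨b + j, by omega⟩ : Fin n) ∈ embSet n b K j' T' :=
    mem_embSet.2 (Or.inl (by simp only; omega))
  rw [← heq] at hx
  rcases mem_embSet.1 hx with h | ⟨q, -, h⟩
  · simp only at h; omega
  · simp only at h; omega

lemma decomp {n b K : ℕ} (hn : b + 3 * K + 3 ≤ n) (hbK : K + 1 ≤ b) :
    (intervalChain n (K + 2)).filter
      (fun A => A.card ≤ b + 2 * K + 1 ∧ ∃ a : Fin n, a ∈ A ∧ b + K < (a : ℕ))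
    = (Finset.range (2 * K + 2)).biUnion
        (fun j => (Finset.univ.powerset.filter (Qpred K j)).image (embSet n b K j)) := by
  ext A
  simp only [Finset.mem_filter, Finset.mem_biUnion, Finset.mem_range, Finset.mem_image,
    Finset.mem_powerset, Finset.subset_univ, true_and]
  constructor
  · rintro ⟨hch, hcard, a, haA, haK⟩
    obtain ⟨i, hi, h1, h2⟩ := mem_chain.1 hch
    have hAne : A ≠ Finset.univ := by
      intro h
      have := congrArg Finset.card h
      rw [Finset.card_univ, Fintype.card_fin] at this
      omega
    have hne : (Finset.univ \ A).Nonempty := by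
      rw [Finset.sdiff_nonempty]
      intro hsub
      exact hAne (Finset.univ_subset_iff.1 hsub)
    set u := (Finset.univ \ A).min' hne with hu
    have huA : u ∉ A := (Finset.mem_sdiff.1 (Finset.min'_mem _ hne)).2
    have hlt : ∀ x : Fin n, (x : ℕ) < (u : ℕ) → x ∈ A := by
      intro x hx
      by_contra hxA
      have hle := Finset.min'_le (Finset.univ \ A) x
        (Finset.mem_sdiff.2 ⟨Finset.mem_univ x, hxA⟩)
      rw [Fin.le_def] at hle
      omega
    have hinit : initSeg n (u : ℕ) ⊆ A := fun x hx => hlt x (mem_initSeg.1 hx)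
    have hti : i ≤ (u : ℕ) := by
      by_contra hc
      exact huA (h1 (mem_initSeg.2 (by omega)))
    have htub : (u : ℕ) ≤ b + 2 * K + 1 := by
      have := Finset.card_le_card hinit
      rw [initSeg_card (le_of_lt u.isLt)] at this
      omega
    have haiK : (a : ℕ) < i + (K + 2) := mem_initSeg.1 (h2 haA)
    have htlb : b ≤ (u : ℕ) := by omega
    set j := (u : ℕ) - b with hj
    have hbj : b + j = (u : ℕ) := by omega
    have hjub : j ≤ 2 * K + 1 := by omega
    set T := Finset.univ.filter
      (fun q : Fin (K + 1) => ∃ x : Fin n, x ∈ A ∧ (x : ℕ) = (u : ℕ) + 1 + (q : ℕ)) with hT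
    have hAeq : embSet n b K j T = A := by
      ext x
      rw [mem_embSet, hbj]
      constructor
      · rintro (hx | ⟨q, hqT, hx⟩)
        · exact hlt x (by omega)
        · obtain ⟨x', hx'A, hx'⟩ := (Finset.mem_filter.1 hqT).2
          have : x = x' := Fin.ext (by omega)
          rw [this]; exact hx'A
      · intro hxA
        by_cases hx : (x : ℕ) < (u : ℕ)
        · exact Or.inl hx
        · right
          have hxu : (x : ℕ) ≠ (u : ℕ) := by
            intro h
            exact huA (Fin.ext h ▸ hxA)
          have hxiK : (x : ℕ) < i + (K + 2) := mem_initSeg.1 (h2 hxA)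
          refine ⟨⟨(x : ℕ) - ((u : ℕ) + 1), by omega⟩,
            Finset.mem_filter.2 ⟨Finset.mem_univ _, ⟨x, hxA, by simp only; omega⟩⟩,
            by simp only; omega⟩
    have hcardA : A.card = b + j + T.card := by
      rw [← hAeq, card_embSet hn hjub]
    refine ⟨j, by omega, T, ⟨?_, ?_⟩, hAeq⟩
    · omega
    · by_cases hjK : K + 2 ≤ j
      · exact Or.inl hjK
      · right
        have haemb : a ∈ embSet n b K j T := hAeq.symm ▸ haA
        rcases mem_embSet.1 haemb with h | ⟨q, hqT, h⟩
        · omega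
        · exact ⟨q, hqT, by omega⟩
  · rintro ⟨j, hj, T, hQT, rfl⟩
    have hj' : j ≤ 2 * K + 1 := by omega
    obtain ⟨hQ1, hQ2⟩ := hQT
    refine ⟨?_, ?_, ?_⟩
    · refine mem_chain.2 ⟨b + j, by omega, ?_, ?_⟩
      · intro x hx
        exact mem_embSet.2 (Or.inl (mem_initSeg.1 hx))
      · intro x hx
        rcases mem_embSet.1 hx with h | ⟨q, -, h⟩
        · exact mem_initSeg.2 (by omega)
        · exact mem_initSeg.2 (by have := q.isLt; omega)
    · rw [card_embSet hn hj']
      omega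
    · rcases hQ2 with hjK | ⟨q, hqT, hqK⟩
      · refine ⟨⟨b + K + 1, by omega⟩, mem_embSet.2 (Or.inl (by simp only; omega)),
          by simp only; omega⟩
      · refine ⟨⟨b + j + 1 + (q : ℕ), by have := q.isLt; omega⟩,
          mem_embSet.2 (Or.inr ⟨q, hqT, rfl⟩), by simp only; omega⟩

lemma card_le_K1 {K : ℕ} (T : Finset (Fin (K + 1))) : T.card ≤ K + 1 := by
  have := Finset.card_le_card (Finset.subset_univ T)
  rwa [Finset.card_univ, Fintype.card_fin] at this

lemma fiber_eval_low (K j : ℕ) (hj : j ≤ K) :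
    ((Finset.univ.powerset : Finset (Finset (Fin (K + 1)))).filter (Qpred K j)).card
      + 2 ^ (K - j) = 2 ^ (K + 1) := by
  have hcong : (Finset.univ.powerset : Finset (Finset (Fin (K + 1)))).filter (Qpred K j)
      = (Finset.univ.powerset : Finset (Finset (Fin (K + 1)))).filter
          (fun T => ∃ q : Fin (K + 1), q ∈ T ∧ (K - j) ≤ (q : ℕ)) := by
    apply Finset.filter_congr
    intro T _
    unfold Qpred
    have hc := card_le_K1 T
    constructor
    · rintro ⟨-, h⟩
      rcases h with h | ⟨q, hq, hqK⟩
      · omega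
      · exact ⟨q, hq, by omega⟩
    · rintro ⟨q, hq, hqK⟩
      exact ⟨by omega, Or.inr ⟨q, hq, by omega⟩⟩
  rw [hcong]
  exact fiber_exists (K + 1) (K - j) (by omega)

lemma fiber_eval_mid (K : ℕ) :
    ((Finset.univ.powerset : Finset (Finset (Fin (K + 1)))).filter (Qpred K (K + 1))).card
      + 2 = 2 ^ (K + 1) := by
  have hcong : (Finset.univ.powerset : Finset (Finset (Fin (K + 1)))).filter (Qpred K (K + 1))
      = (Finset.univ.powerset : Finset (Finset (Fin (K + 1)))).filter
          (fun T => T.card ≤ K ∧ T.Nonempty) := by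
    apply Finset.filter_congr
    intro T _
    unfold Qpred
    constructor
    · rintro ⟨h1, h⟩
      refine ⟨by omega, ?_⟩
      rcases h with h | ⟨q, hq, -⟩
      · omega
      · exact ⟨q, hq⟩
    · rintro ⟨h1, q, hq⟩
      exact ⟨by omega, Or.inr ⟨q, hq, by omega⟩⟩
  rw [hcong]
  exact fiber_mid K

lemma fiber_eval_high (K i : ℕ) (hi : i < K) :
    ((Finset.univ.powerset : Finset (Finset (Fin (K + 1)))).filter (Qpred K (K + 2 + i))).card
      = ∑ c ∈ range (K - i), (K + 1).choose c := by
  have hcong : (Finset.univ.powerset : Finset (Finset (Fin (K + 1)))).filter (Qpred K (K + 2 + i))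
      = (Finset.univ.powerset : Finset (Finset (Fin (K + 1)))).filter
          (fun T => T.card ≤ K - 1 - i) := by
    apply Finset.filter_congr
    intro T _
    unfold Qpred
    constructor
    · rintro ⟨h1, -⟩; omega
    · intro h
      exact ⟨by omega, Or.inl (by omega)⟩
  have hr : K - 1 - i + 1 = K - i := by omega
  rw [hcong, fiber_small (K + 1) (K - 1 - i), hr]

/-- For `3k-3 ≤ m ≤ n-k+1`, the number of sets in the `k`-interval chain of cardinality
at most `m-1` that are incomparable to at least one set in the chain of cardinality at
least `m` equals `(3k-5)⬝2^{k-2}`. -/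
theorem intervalChain_unrelated_count (n k m : ℕ) (hk : 2 ≤ k)
    (hm₁ : 3 * k - 3 ≤ m) (hm₂ : m ≤ n - k + 1) :
    ((intervalChain n k).filter (fun A => A.card ≤ m - 1 ∧
        ∃ B ∈ intervalChain n k, m ≤ B.card ∧ ¬ A ⊆ B ∧ ¬ B ⊆ A)).card
      = (3 * k - 5) * 2 ^ (k - 2) := by
  obtain ⟨K, rfl⟩ : ∃ K, k = K + 2 := ⟨k - 2, by omega⟩
  have hm₁' : 3 * K + 3 ≤ m := by omega
  have hn : m + K + 1 ≤ n := by omega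
  obtain ⟨b, rfl, hbK⟩ : ∃ b, m = b + 2 * K + 2 ∧ K + 1 ≤ b :=
    ⟨m - (2 * K + 2), by omega, by omega⟩
  have hn' : b + 3 * K + 3 ≤ n := by omega
  have hstep : (intervalChain n (K + 2)).filter (fun A => A.card ≤ b + 2 * K + 2 - 1 ∧
        ∃ B ∈ intervalChain n (K + 2), b + 2 * K + 2 ≤ B.card ∧ ¬ A ⊆ B ∧ ¬ B ⊆ A)
      = (intervalChain n (K + 2)).filter
          (fun A => A.card ≤ b + 2 * K + 1 ∧ ∃ a : Fin n, a ∈ A ∧ b + K < (a : ℕ)) := by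
    ext A
    simp only [Finset.mem_filter]
    constructor
    · rintro ⟨hch, h1, h2⟩
      obtain ⟨a, ha, haK⟩ := (char_lemma (n := n) (k := K + 2) (m := b + 2 * K + 2)
        (by omega) (by omega) (by omega) h1).1 h2
      exact ⟨hch, by omega, a, ha, by omega⟩
    · rintro ⟨hch, h1, a, ha, haK⟩
      exact ⟨hch, by omega, (char_lemma (n := n) (k := K + 2) (m := b + 2 * K + 2)
        (by omega) (by omega) (by omega) (by omega)).2 ⟨a, ha, by omega⟩⟩
  have hinst : ∀ (inst : DecidablePred (fun A : Finset (Fin n) => A.card ≤ b + 2 * K + 2 - 1 ∧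
        ∃ B ∈ intervalChain n (K + 2), b + 2 * K + 2 ≤ B.card ∧ ¬ A ⊆ B ∧ ¬ B ⊆ A)),
      @Finset.filter _ _ inst (intervalChain n (K + 2))
        = (Finset.range (2 * K + 2)).biUnion
            (fun j => (Finset.univ.powerset.filter (Qpred K j)).image (embSet n b K j)) := by
    intro inst
    exact Eq.trans (congrArg (fun i => @Finset.filter _ _ i (intervalChain n (K + 2)))
      (Subsingleton.elim inst _)) (hstep.trans (decomp hn' hbK))
  rw [hinst _]
  have hdisj : ∀ j ∈ range (2 * K + 2), ∀ j' ∈ range (2 * K + 2), j ≠ j' →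
      Disjoint ((Finset.univ.powerset.filter (Qpred K j)).image (embSet n b K j))
        ((Finset.univ.powerset.filter (Qpred K j')).image (embSet n b K j')) := by
    intro j hj j' hj' hne
    have hjr := mem_range.1 hj
    have hj'r := mem_range.1 hj'
    rw [Finset.disjoint_left]
    rintro S hS hS'
    obtain ⟨T, -, rfl⟩ := Finset.mem_image.1 hS
    obtain ⟨T', -, h⟩ := Finset.mem_image.1 hS'
    rcases lt_or_gt_of_ne hne with hlt | hlt
    · exact embSet_ne hn' hlt (by omega) T T' h.symm
    · exact embSet_ne hn' hlt (by omega) T' T h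
  rw [Finset.card_biUnion hdisj]
  have himg : ∀ j ∈ range (2 * K + 2),
      ((Finset.univ.powerset.filter (Qpred K j)).image (embSet n b K j)).card
        = (Finset.univ.powerset.filter (Qpred K j)).card := by
    intro j hj
    apply Finset.card_image_of_injOn
    intro T _ T' _ h
    exact embSet_injOn hn' (by have := mem_range.1 hj; omega) h
  rw [Finset.sum_congr rfl himg]
  set N : ℕ → ℕ := fun j => (Finset.univ.powerset.filter (Qpred K j)).card with hN
  have hsplit1 := Finset.sum_range_add_sum_Ico N (show K + 2 ≤ 2 * K + 2 by omega)
  have hIco : ∑ j ∈ Finset.Ico (K + 2) (2 * K + 2), N j = ∑ i ∈ range K, N (K + 2 + i) := by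
    rw [Finset.sum_Ico_eq_sum_range]
    have : 2 * K + 2 - (K + 2) = K := by omega
    rw [this]
  have hsucc : ∑ j ∈ range (K + 2), N j = (∑ j ∈ range (K + 1), N j) + N (K + 1) :=
    Finset.sum_range_succ N (K + 1)
  have htot : ∑ j ∈ range (2 * K + 2), N j
      = (∑ j ∈ range (K + 1), N j) + N (K + 1) + ∑ i ∈ range K, N (K + 2 + i) := by
    rw [← hsplit1, hIco, hsucc]
  rw [htot]
  have hlow : ∑ j ∈ range (K + 1), N j
      = ∑ j ∈ range (K + 1), (2 ^ (K + 1) - 2 ^ (K - j)) := by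
    apply Finset.sum_congr rfl
    intro j hj
    have h : N j + 2 ^ (K - j) = 2 ^ (K + 1) := by
      simp only [hN]
      exact fiber_eval_low K j (by have := mem_range.1 hj; omega)
    have hle : 2 ^ (K - j) ≤ 2 ^ (K + 1) := Nat.pow_le_pow_right (by norm_num) (by omega)
    omega
  have hhigh : ∑ i ∈ range K, N (K + 2 + i)
      = ∑ i ∈ range K, ∑ c ∈ range (K - i), (K + 1).choose c := by
    apply Finset.sum_congr rfl
    intro i hi
    simp only [hN]
    exact fiber_eval_high K i (mem_range.1 hi)
  rw [hlow, hhigh]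
  have hS1 := sum_S1 K
  have hmid : N (K + 1) + 2 = 2 ^ (K + 1) := by
    simp only [hN]
    exact fiber_eval_mid K
  have hphi := phi_identity K
  have hgr : 3 * (K + 2) - 5 = 3 * K + 1 := by omega
  have hge : K + 2 - 2 = K := by omega
  rw [hgr, hge]
  have hp : (K + 1) * 2 ^ (K + 1) = 2 * (K * 2 ^ K) + 2 * 2 ^ K := by ring
  have hpow : 2 ^ (K + 1) = 2 * 2 ^ K := by ring
  have hg : (3 * K + 1) * 2 ^ K = 3 * (K * 2 ^ K) + 2 ^ K := by ring
  rw [hg]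
  rw [hp, hpow] at hS1
  rw [hpow] at hmid
  rw [hpow]
  generalize K * 2 ^ K = z at hS1 hphi ⊢
  generalize 2 ^ K = P at hS1 hmid hphi ⊢
  omega
end
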